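/- Plasmon resonance at an interior point of the continuous spectrum: let g = (g₁, g₂) ∈ W* have continuous components, and for δ > 0 set N(δ) = (1/2)∫_ℝ [ p₁(s)|g₁(s)|²/((λ₀ − η(s))² + δ²) + p₂(s)|g₂(s)|²/((λ₀ + η(s))² + δ²) ] ds (which is the squared W*-norm of the resolvent (λ₀ + iδ − 𝕂*)^{−1}g). If λ₀ ∈ (0, b), then lim_{δ→0⁺} δ·N(δ) = π·p₁(s₀)·(|g₁(s₀)|² + |g₁(−s₀)|²)/(2|η'(s₀)|) with s₀ = σ(λ₀); if λ₀ ∈ (−b, 0), then lim_{δ→0⁺} δ·N(δ) = π·p₂(s₀)·(|g₂(s₀)|² + |g₂(−s₀)|²)/(2|η'(s₀)|) with s₀ = σ(−λ₀). -/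

import Mathlib

open Real Filter Topology Set MeasureTheory

/-- The weight `p₁`. -/
noncomputable def p1 (θ₀ : ℝ) (s : ℝ) : ℝ :=
  if s = 0 then θ₀ * (π - θ₀) / π
  else Real.sinh (s * θ₀) * Real.sinh (s * (π - θ₀)) / (s * Real.sinh (s * π))

/-- The weight `p₂`. -/
noncomputable def p2 (θ₀ : ℝ) (s : ℝ) : ℝ :=
  Real.cosh (s * θ₀) * Real.cosh (s * (π - θ₀)) / (s * Real.sinh (s * π))

/-- The symbol `η`. -/
noncomputable def eta (θ₀ : ℝ) (s : ℝ) : ℝ :=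
  if s = 0 then 1 / 2 - θ₀ / π
  else Real.sinh (s * (π - 2 * θ₀)) / (2 * Real.sinh (s * π))

/-- The measure `p₁(s) ds`. -/
noncomputable def mu1 (θ₀ : ℝ) : Measure ℝ :=
  (volume : Measure ℝ).withDensity fun s => ENNReal.ofReal (p1 θ₀ s)

/-- The measure `p₂(s) ds`. -/
noncomputable def mu2 (θ₀ : ℝ) : Measure ℝ :=
  (volume : Measure ℝ).withDensity fun s => ENNReal.ofReal (p2 θ₀ s)




/-- monotone helper -/
lemma mono_aux {f D : ℝ → ℝ} {J : Set ℝ} (hJ : Convex ℝ J)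
    (hf : ∀ x ∈ J, HasDerivAt f (D x) x) (h0 : ∀ x ∈ J, 0 ≤ D x) :
    MonotoneOn f J := by
  apply monotoneOn_of_deriv_nonneg hJ
  · exact fun x hx => ((hf x hx).continuousAt).continuousWithinAt
  · exact fun x hx => ((hf x (interior_subset hx)).differentiableAt).differentiableWithinAt
  · intro x hx
    rw [(hf x (interior_subset hx)).deriv]
    exact h0 x (interior_subset hx)

lemma strict_mono_aux {f D : ℝ → ℝ} {J : Set ℝ} (hJ : Convex ℝ J)
    (hf : ∀ x ∈ J, HasDerivAt f (D x) x) (h0 : ∀ x ∈ interior J, 0 < D x) :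
    StrictMonoOn f J := by
  apply strictMonoOn_of_deriv_pos hJ
  · exact fun x hx => ((hf x hx).continuousAt).continuousWithinAt
  · intro x hx
    rw [(hf x (interior_subset hx)).deriv]
    exact h0 x hx

section eta
variable {θ₀ : ℝ}

lemma ha (h1 : θ₀ < π / 2) : 0 < π - 2*θ₀ := by linarith
lemma haπ (h0 : 0 < θ₀) : π - 2*θ₀ < π := by linarith
lemma hb (h0 : 0 < θ₀) (h1 : θ₀ < π / 2) : 0 < 1/2 - θ₀/π := by
  have hπ := pi_pos
  rw [sub_pos, div_lt_iff₀ hπ]; linarith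

lemma eta_even (s : ℝ) : eta θ₀ (-s) = eta θ₀ s := by
  unfold eta
  rcases eq_or_ne s 0 with rfl | hs
  · simp
  · rw [if_neg (neg_ne_zero.2 hs), if_neg hs]
    rw [neg_mul, Real.sinh_neg, neg_mul, Real.sinh_neg]
    rw [mul_neg, neg_div_neg_eq]

lemma eta_pos (h0 : 0 < θ₀) (h1 : θ₀ < π / 2) (s : ℝ) : 0 < eta θ₀ s := by
  unfold eta
  rcases eq_or_ne s 0 with rfl | hs
  · simpa using hb h0 h1
  · rw [if_neg hs]
    rcases lt_or_gt_of_ne hs with h | h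
    · apply div_pos_of_neg_of_neg
      · exact Real.sinh_neg_iff.2 (by nlinarith [ha h1])
      · have : Real.sinh (s*π) < 0 := Real.sinh_neg_iff.2 (by nlinarith [pi_pos])
        linarith
    · apply div_pos
      · exact Real.sinh_pos_iff.2 (by nlinarith [ha h1])
      · have : 0 < Real.sinh (s*π) := Real.sinh_pos_iff.2 (by nlinarith [pi_pos])
        linarith

/-- the derivative formula for eta, for s ≠ 0 -/
noncomputable def etaD (θ₀ : ℝ) (s : ℝ) : ℝ :=
  (Real.cosh (s * (π - 2*θ₀)) * (π - 2*θ₀) * (2 * Real.sinh (s * π)) -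
    Real.sinh (s * (π - 2*θ₀)) * (2 * (Real.cosh (s * π) * π))) / (2 * Real.sinh (s * π))^2

lemma eta_hasDerivAt {s : ℝ} (hs : s ≠ 0) : HasDerivAt (eta θ₀) (etaD θ₀ s) s := by
  have hne : Real.sinh (s * π) ≠ 0 := by
    intro h
    have := Real.sinh_eq_zero.1 h
    have hπ := pi_ne_zero
    exact hs (by rcases mul_eq_zero.1 this with h|h; exact h; exact absurd h hπ)
  have h1' : HasDerivAt (fun x : ℝ => Real.sinh (x * (π - 2*θ₀)))
      (Real.cosh (s * (π - 2*θ₀)) * (π - 2*θ₀)) s := by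
    have := (Real.hasDerivAt_sinh (s * (π - 2*θ₀))).comp s
      ((hasDerivAt_id s).mul_const (π - 2*θ₀))
    simpa [Function.comp_def] using this
  have h2' : HasDerivAt (fun x : ℝ => 2 * Real.sinh (x * π))
      (2 * (Real.cosh (s * π) * π)) s := by
    have := ((Real.hasDerivAt_sinh (s * π)).comp s
      ((hasDerivAt_id s).mul_const π)).const_mul 2
    simpa [Function.comp_def] using this
  have hdiv := h1'.div h2' (by simpa using hne)
  apply hdiv.congr_of_eventuallyEq
  have : {x : ℝ | x ≠ 0} ∈ 𝓝 s := isOpen_ne.mem_nhds hs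
  filter_upwards [this] with x hx
  unfold eta
  rw [if_neg hx]
  rfl

end eta



section sign
variable {a : ℝ} (ha0 : 0 < a) (haπ : a < π)

-- H x := π sinh(x a) cosh(x π) − a cosh(x a) sinh(x π) > 0 for x > 0
lemma H_pos (ha0 : 0 < a) (haπ : a < π) {s : ℝ} (hs : 0 < s) :
    a * Real.cosh (s*a) * Real.sinh (s*π) < π * Real.sinh (s*a) * Real.cosh (s*π) := by
  have key : StrictMonoOn (fun x : ℝ => π * Real.sinh (x*a) * Real.cosh (x*π)
      - a * Real.cosh (x*a) * Real.sinh (x*π)) (Set.Ici 0) := by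
    apply strict_mono_aux (convex_Ici 0)
      (D := fun x => (π^2 - a^2) * (Real.sinh (x*a) * Real.sinh (x*π)))
    · intro x _
      have hsa : HasDerivAt (fun x : ℝ => Real.sinh (x*a)) (Real.cosh (x*a) * a) x := by
        simpa [Function.comp_def] using (Real.hasDerivAt_sinh (x*a)).comp x ((hasDerivAt_id x).mul_const a)
      have hca : HasDerivAt (fun x : ℝ => Real.cosh (x*a)) (Real.sinh (x*a) * a) x := by
        simpa [Function.comp_def] using (Real.hasDerivAt_cosh (x*a)).comp x ((hasDerivAt_id x).mul_const a)
      have hsπ : HasDerivAt (fun x : ℝ => Real.sinh (x*π)) (Real.cosh (x*π) * π) x := by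
        simpa [Function.comp_def] using (Real.hasDerivAt_sinh (x*π)).comp x ((hasDerivAt_id x).mul_const π)
      have hcπ : HasDerivAt (fun x : ℝ => Real.cosh (x*π)) (Real.sinh (x*π) * π) x := by
        simpa [Function.comp_def] using (Real.hasDerivAt_cosh (x*π)).comp x ((hasDerivAt_id x).mul_const π)
      have := ((hsa.const_mul π).mul hcπ).sub ((hca.const_mul a).mul hsπ)
      refine this.congr_deriv ?_
      ring
    · intro x hx
      rw [interior_Ici] at hx
      have h1 : 0 < Real.sinh (x*a) := Real.sinh_pos_iff.2 (mul_pos hx ha0)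
      have h2 : 0 < Real.sinh (x*π) := Real.sinh_pos_iff.2 (mul_pos hx (lt_trans ha0 haπ))
      have h3 : 0 < π^2 - a^2 := by nlinarith
      exact mul_pos h3 (mul_pos h1 h2)
  have := key (Set.mem_Ici.2 le_rfl) (Set.mem_Ici.2 (le_of_lt hs)) hs
  simp at this
  linarith

-- sinh(s a)/(2 sinh(s π)) < a / (2π) for s > 0  (i.e. eta s < eta 0)
lemma G_pos (ha0 : 0 < a) (haπ : a < π) {s : ℝ} (hs : 0 < s) :
    π * Real.sinh (s*a) < a * Real.sinh (s*π) := by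
  have key : StrictMonoOn (fun x : ℝ => a * Real.sinh (x*π) - π * Real.sinh (x*a))
      (Set.Ici 0) := by
    apply strict_mono_aux (convex_Ici 0)
      (D := fun x => a*π*(Real.cosh (x*π) - Real.cosh (x*a)))
    · intro x _
      have hsa : HasDerivAt (fun x : ℝ => Real.sinh (x*a)) (Real.cosh (x*a) * a) x := by
        simpa [Function.comp_def] using (Real.hasDerivAt_sinh (x*a)).comp x ((hasDerivAt_id x).mul_const a)
      have hsπ : HasDerivAt (fun x : ℝ => Real.sinh (x*π)) (Real.cosh (x*π) * π) x := by
        simpa [Function.comp_def] using (Real.hasDerivAt_sinh (x*π)).comp x ((hasDerivAt_id x).mul_const π)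
      have := (hsπ.const_mul a).sub (hsa.const_mul π)
      refine this.congr_deriv ?_
      ring
    · intro x hx
      rw [interior_Ici] at hx
      have h1 : Real.cosh (x*a) < Real.cosh (x*π) := by
        apply Real.cosh_lt_cosh.2
        rw [abs_of_pos (mul_pos hx ha0), abs_of_pos (mul_pos hx (lt_trans ha0 haπ))]
        exact (mul_lt_mul_iff_right₀ hx).2 haπ
      have : 0 < a*π := by positivity
      nlinarith
  have := key (Set.mem_Ici.2 le_rfl) (Set.mem_Ici.2 (le_of_lt hs)) hs
  simp at this
  linarith
end sign




section s3
variable {θ₀ : ℝ}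

lemma sinh_smul_pos {s c : ℝ} (hs : s ≠ 0) (hc : 0 < c) : 0 < s * Real.sinh (s * c) := by
  rcases lt_or_gt_of_ne hs with h | h
  · have : Real.sinh (s*c) < 0 := Real.sinh_neg_iff.2 (by nlinarith)
    nlinarith
  · have : 0 < Real.sinh (s*c) := Real.sinh_pos_iff.2 (by nlinarith)
    nlinarith

lemma p1_nonneg (h0 : 0 < θ₀) (h1 : θ₀ < π/2) (s : ℝ) : 0 ≤ p1 θ₀ s := by
  unfold p1
  have hπ := pi_pos
  rcases eq_or_ne s 0 with rfl | hs
  · simp only [if_pos rfl]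
    have : 0 < π - θ₀ := by linarith
    positivity
  · rw [if_neg hs]
    apply le_of_lt
    apply div_pos
    · rcases lt_or_gt_of_ne hs with h | h
      · exact mul_pos_of_neg_of_neg (Real.sinh_neg_iff.2 (by nlinarith))
          (Real.sinh_neg_iff.2 (by nlinarith))
      · exact mul_pos (Real.sinh_pos_iff.2 (by nlinarith))
          (Real.sinh_pos_iff.2 (by nlinarith))
    · exact sinh_smul_pos hs hπ

lemma p2_nonneg (h0 : 0 < θ₀) (h1 : θ₀ < π/2) (s : ℝ) : 0 ≤ p2 θ₀ s := by
  unfold p2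
  have hπ := pi_pos
  rcases eq_or_ne s 0 with rfl | hs
  · simp
  · apply le_of_lt
    apply div_pos (mul_pos (Real.cosh_pos _) (Real.cosh_pos _)) (sinh_smul_pos hs hπ)

lemma p1_even (s : ℝ) : p1 θ₀ (-s) = p1 θ₀ s := by
  unfold p1
  rcases eq_or_ne s 0 with rfl | hs
  · simp
  · rw [if_neg (neg_ne_zero.2 hs), if_neg hs]
    simp only [neg_mul, Real.sinh_neg]
    ring

lemma p2_even (s : ℝ) : p2 θ₀ (-s) = p2 θ₀ s := by
  unfold p2
  simp only [neg_mul, Real.sinh_neg, Real.cosh_neg]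
  ring

lemma p1_continuousAt {s : ℝ} (hs : s ≠ 0) : ContinuousAt (p1 θ₀) s := by
  have hne : s * Real.sinh (s * π) ≠ 0 := ne_of_gt (sinh_smul_pos hs pi_pos)
  have : ContinuousAt (fun s : ℝ =>
      Real.sinh (s * θ₀) * Real.sinh (s * (π - θ₀)) / (s * Real.sinh (s * π))) s := by
    fun_prop (disch := assumption)
  apply this.congr
  filter_upwards [isOpen_ne.mem_nhds hs] with x hx
  unfold p1
  rw [if_neg hx]

lemma p2_continuousAt {s : ℝ} (hs : s ≠ 0) : ContinuousAt (p2 θ₀) s := by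
  have hne : s * Real.sinh (s * π) ≠ 0 := ne_of_gt (sinh_smul_pos hs pi_pos)
  unfold p2
  fun_prop (disch := assumption)

lemma eta_continuousAt {s : ℝ} (hs : s ≠ 0) : ContinuousAt (eta θ₀) s := by
  have hne : (2 : ℝ) * Real.sinh (s * π) ≠ 0 := by
    have := sinh_smul_pos hs pi_pos
    rcases lt_or_gt_of_ne hs with h | h
    · intro hh; nlinarith [(by nlinarith : s * Real.sinh (s*π) > 0)]
    · intro hh; nlinarith
  have : ContinuousAt (fun s : ℝ =>
      Real.sinh (s * (π - 2 * θ₀)) / (2 * Real.sinh (s * π))) s := by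
    fun_prop (disch := assumption)
  apply this.congr
  filter_upwards [isOpen_ne.mem_nhds hs] with x hx
  unfold eta
  rw [if_neg hx]

lemma p1_measurable : Measurable (p1 θ₀) := by
  unfold p1
  apply Measurable.ite (measurableSet_eq) measurable_const
  apply Measurable.div
  · fun_prop
  · fun_prop

lemma p2_measurable : Measurable (p2 θ₀) := by
  unfold p2
  apply Measurable.div <;> fun_prop

lemma eta_measurable : Measurable (eta θ₀) := by
  unfold eta
  apply Measurable.ite (measurableSet_eq) measurable_const
  apply Measurable.div <;> fun_prop

end s3

section s4
variable {θ₀ : ℝ}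

lemma strict_anti_aux {f D : ℝ → ℝ} {J : Set ℝ} (hJ : Convex ℝ J)
    (hf : ∀ x ∈ J, HasDerivAt f (D x) x) (hneg : ∀ x ∈ interior J, D x < 0) :
    StrictAntiOn f J := by
  apply strictAntiOn_of_deriv_neg hJ
  · exact fun x hx => ((hf x hx).continuousAt).continuousWithinAt
  · intro x hx
    rw [(hf x (interior_subset hx)).deriv]
    exact hneg x hx

lemma etaD_neg (h0 : 0 < θ₀) (h1 : θ₀ < π/2) {s : ℝ} (hs : 0 < s) : etaD θ₀ s < 0 := by
  unfold etaD
  apply div_neg_of_neg_of_pos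
  · have := H_pos (a := π - 2*θ₀) (ha h1) (by linarith) hs
    nlinarith
  · have h2 : 0 < Real.sinh (s*π) := Real.sinh_pos_iff.2 (mul_pos hs pi_pos)
    positivity

lemma eta_zero_eq : eta θ₀ 0 = 1/2 - θ₀/π := by unfold eta; simp

lemma eta_lt_eta_zero (h0 : 0 < θ₀) (h1 : θ₀ < π/2) {s : ℝ} (hs : 0 < s) :
    eta θ₀ s < eta θ₀ 0 := by
  rw [eta_zero_eq]
  unfold eta
  rw [if_neg (ne_of_gt hs)]
  have hG := G_pos (a := π - 2*θ₀) (ha h1) (by linarith) hs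
  have h2 : 0 < Real.sinh (s*π) := Real.sinh_pos_iff.2 (mul_pos hs pi_pos)
  have hπ := pi_pos
  rw [div_lt_iff₀ (by linarith : (0:ℝ) < 2 * Real.sinh (s*π))]
  have : 1/2 - θ₀/π = (π - 2*θ₀)/(2*π) := by field_simp
  rw [this]
  rw [div_mul_eq_mul_div, lt_div_iff₀ (by linarith : (0:ℝ) < 2*π)]
  nlinarith

lemma eta_strictAntiOn (h0 : 0 < θ₀) (h1 : θ₀ < π/2) :
    StrictAntiOn (eta θ₀) (Set.Ici 0) := by
  have hIoi : StrictAntiOn (eta θ₀) (Set.Ioi 0) := by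
    apply strict_anti_aux (convex_Ioi 0) (D := etaD θ₀)
    · exact fun x hx => eta_hasDerivAt (ne_of_gt hx)
    · intro x hx
      rw [interior_Ioi] at hx
      exact etaD_neg h0 h1 hx
  intro x hx y hy hxy
  rcases eq_or_lt_of_le (Set.mem_Ici.1 hx) with rfl | hx'
  · exact eta_lt_eta_zero h0 h1 hxy
  · exact hIoi hx' (lt_trans hx' hxy) hxy

lemma eta_antitoneOn (h0 : 0 < θ₀) (h1 : θ₀ < π/2) :
    AntitoneOn (eta θ₀) (Set.Ici 0) :=
  (eta_strictAntiOn h0 h1).antitoneOn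

end s4

section core

lemma mono_aux' {f D : ℝ → ℝ} {J : Set ℝ} (hJ : Convex ℝ J)
    (hf : ∀ x ∈ J, HasDerivAt f (D x) x) (h0 : ∀ x ∈ J, 0 ≤ D x) :
    MonotoneOn f J := by
  apply monotoneOn_of_deriv_nonneg hJ
  · exact fun x hx => ((hf x hx).continuousAt).continuousWithinAt
  · exact fun x hx => ((hf x (interior_subset hx)).differentiableAt).differentiableWithinAt
  · intro x hx
    rw [(hf x (interior_subset hx)).deriv]
    exact h0 x (interior_subset hx)

lemma integral_lorentz {k δ : ℝ} (hk : 0 < k) (hδ : 0 < δ) (x₀ u v : ℝ) :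
    ∫ x in u..v, 1/(k^2*(x-x₀)^2 + δ^2)
      = (1/(k*δ)) * (Real.arctan (k*(v-x₀)/δ) - Real.arctan (k*(u-x₀)/δ)) := by
  have hden : ∀ x : ℝ, k^2*(x-x₀)^2 + δ^2 ≠ 0 := fun x => by positivity
  have key : ∀ x : ℝ, HasDerivAt (fun y => (1/(k*δ)) * Real.arctan (k*(y-x₀)/δ))
      (1/(k^2*(x-x₀)^2 + δ^2)) x := by
    intro x
    have hinner : HasDerivAt (fun y : ℝ => k*(y-x₀)/δ) (k/δ) x := by
      simpa using (((hasDerivAt_id x).sub_const x₀).const_mul k).div_const δ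
    have harc := (Real.hasDerivAt_arctan (k*(x-x₀)/δ)).comp x hinner
    have h2 := harc.const_mul (1/(k*δ))
    refine h2.congr_deriv ?_
    have h1 : (1 : ℝ) + (k*(x-x₀)/δ)^2 ≠ 0 := by positivity
    field_simp
    ring
  rw [intervalIntegral.integral_eq_sub_of_hasDerivAt (fun x _ => key x)]
  · ring
  · apply Continuous.intervalIntegrable
    exact continuous_const.div (by continuity) hden

lemma lorentz_sym {k δ : ℝ} (hk : 0 < k) (hδ : 0 < δ) (x₀ r : ℝ) :
    ∫ x in (x₀-r)..(x₀+r), 1/(k^2*(x-x₀)^2 + δ^2) = (2/(k*δ)) * Real.arctan (k*r/δ) := by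
  rw [integral_lorentz hk hδ, show x₀ + r - x₀ = r by ring, show x₀ - r - x₀ = -r by ring,
    show k * -r/δ = -(k*r/δ) by ring, Real.arctan_neg]
  ring

lemma arctan_tendsto {C : ℝ} (hC : 0 < C) :
    Tendsto (fun δ : ℝ => Real.arctan (C/δ)) (𝓝[>](0:ℝ)) (𝓝 (π/2)) := by
  have h1 : Tendsto (fun δ : ℝ => C/δ) (𝓝[>](0:ℝ)) atTop := by
    simpa [div_eq_mul_inv] using tendsto_inv_nhdsGT_zero.const_mul_atTop hC
  exact (Real.tendsto_arctan_atTop.mono_right nhdsWithin_le_nhds).comp h1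

set_option maxHeartbeats 3000000 in
lemma core {F ψ D : ℝ → ℝ} {c d x₀ : ℝ} (hx₀ : x₀ ∈ Set.Ioo c d)
    (hψd : ∀ x ∈ Set.Icc c d, HasDerivAt ψ (D x) x)
    (hDc : ContinuousOn D (Set.Icc c d))
    (hDpos : ∀ x ∈ Set.Icc c d, 0 < D x)
    (hψ0 : ψ x₀ = 0)
    (hFc : ContinuousOn F (Set.Icc c d))
    (hF0 : ∀ x ∈ Set.Icc c d, 0 ≤ F x) :
    Tendsto (fun δ : ℝ => δ * ∫ x in c..d, F x / ((ψ x)^2 + δ^2)) (𝓝[>](0:ℝ))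
      (𝓝 (π * F x₀ / D x₀)) := by
  obtain ⟨hc, hd⟩ := hx₀
  have hx₀' : x₀ ∈ Set.Icc c d := ⟨le_of_lt hc, le_of_lt hd⟩
  set m := D x₀ with hm_def
  have hm : 0 < m := hDpos x₀ hx₀'
  set M := F x₀ with hM_def
  have hM : 0 ≤ M := hF0 x₀ hx₀'
  set L := π * M / m with hL_def
  rw [Metric.tendsto_nhds]
  intro ε hε
  -- Step A : choose θ
  have cont1 : Tendsto (fun θ : ℝ => (M+θ)*(π/(m-θ))) (𝓝 0) (𝓝 L) := by
    have hca : ContinuousAt (fun θ : ℝ => (M+θ)*(π/(m-θ))) 0 := by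
      apply ContinuousAt.mul (by fun_prop)
      apply ContinuousAt.div continuousAt_const (by fun_prop)
      simpa using ne_of_gt hm
    have h := hca.tendsto
    convert h using 2
    rw [hL_def]
    have := hm.ne'
    field_simp
    ring
  have cont2 : Tendsto (fun θ : ℝ => (max (M-θ) 0)*(π/(m+θ))) (𝓝 0) (𝓝 L) := by
    have hca : ContinuousAt (fun θ : ℝ => (max (M-θ) 0)*(π/(m+θ))) 0 := by
      apply ContinuousAt.mul (by fun_prop)
      apply ContinuousAt.div continuousAt_const (by fun_prop)
      simpa using ne_of_gt hm
    have h := hca.tendsto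
    convert h using 2
    rw [hL_def]
    rw [show M - 0 = M by ring, max_eq_left hM]
    field_simp
    ring
  have hev : ∀ᶠ θ in 𝓝[>](0:ℝ),
      ((M+θ)*(π/(m-θ)) < L + ε/2 ∧ L - ε/2 < (max (M-θ) 0)*(π/(m+θ))) ∧ (0 < θ ∧ θ < m) := by
    have e1 := (cont1.mono_left (nhdsWithin_le_nhds : 𝓝[>](0:ℝ) ≤ 𝓝 0)).eventually_lt_const
      (by linarith : L < L + ε/2)
    have e2 := (cont2.mono_left (nhdsWithin_le_nhds : 𝓝[>](0:ℝ) ≤ 𝓝 0)).eventually_const_lt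
      (by linarith : L - ε/2 < L)
    have e3 : ∀ᶠ θ in 𝓝[>](0:ℝ), 0 < θ := eventually_mem_nhdsWithin
    have e4 : ∀ᶠ θ in 𝓝[>](0:ℝ), θ < m :=
      eventually_nhdsWithin_of_eventually_nhds (gt_mem_nhds hm)
    filter_upwards [e1, e2, e3, e4] with θ h1 h2 h3 h4
    exact ⟨⟨h1, h2⟩, h3, h4⟩
  obtain ⟨θ, ⟨hup, hlow⟩, hθ0, hθm⟩ := hev.exists
  set kl := m - θ with hkm_def
  set ku := m + θ with hkp_def
  have hkl : 0 < kl := by rw [hkm_def]; linarith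
  have hku : 0 < ku := by rw [hkp_def]; linarith
  set M' := max (M - θ) 0 with hM'_def
  have hM' : 0 ≤ M' := le_max_right _ _
  -- Step B : choose r
  have hFx : ContinuousAt F x₀ := hFc.continuousAt (Icc_mem_nhds hc hd)
  have hDx : ContinuousAt D x₀ := hDc.continuousAt (Icc_mem_nhds hc hd)
  have hev2 : ∀ᶠ x in 𝓝 x₀, (|F x - M| ≤ θ ∧ |D x - m| ≤ θ) ∧ x ∈ Set.Ioo c d := by
    have e1 := Metric.tendsto_nhds.1 hFx.tendsto θ hθ0
    have e2 := Metric.tendsto_nhds.1 hDx.tendsto θ hθ0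
    filter_upwards [e1, e2, Ioo_mem_nhds hc hd] with x h1 h2 h3
    rw [Real.dist_eq] at h1 h2
    exact ⟨⟨le_of_lt h1, le_of_lt h2⟩, h3⟩
  obtain ⟨r', hr', hball⟩ := Metric.eventually_nhds_iff.1 hev2
  set r := r'/2 with hr_def
  have hr : 0 < r := by positivity
  have hJprop : ∀ x ∈ Set.Icc (x₀ - r) (x₀ + r),
      (|F x - M| ≤ θ ∧ |D x - m| ≤ θ) ∧ x ∈ Set.Ioo c d := by
    intro x hx
    apply hball
    rw [Real.dist_eq, abs_sub_lt_iff]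
    have h1 := hx.1
    have h2 := hx.2
    have hrr : r < r' := by rw [hr_def]; linarith
    constructor <;> linarith
  set J := Set.Icc (x₀ - r) (x₀ + r) with hJ_def
  have hJsub : J ⊆ Set.Icc c d := fun x hx => Set.Ioo_subset_Icc_self (hJprop x hx).2
  have hcr : c ≤ x₀ - r := le_of_lt (hJprop _ (Set.left_mem_Icc.2 (by linarith))).2.1
  have hdr : x₀ + r ≤ d := le_of_lt (hJprop _ (Set.right_mem_Icc.2 (by linarith))).2.2
  have hDJ : ∀ x ∈ J, kl ≤ D x ∧ D x ≤ ku := by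
    intro x hx
    have h := (hJprop x hx).1.2
    rw [abs_sub_le_iff] at h
    rw [hkm_def, hkp_def]
    exact ⟨by linarith [h.2], by linarith [h.1]⟩
  have hFJ : ∀ x ∈ J, M' ≤ F x ∧ F x ≤ M + θ := by
    intro x hx
    have h := (hJprop x hx).1.1
    rw [abs_sub_le_iff] at h
    refine ⟨?_, by linarith [h.1]⟩
    rw [hM'_def]
    exact max_le (by linarith [h.2]) (hF0 x (hJsub hx))
  -- Step C : ψ bounds
  have hψJ : ∀ x ∈ J, HasDerivAt ψ (D x) x := fun x hx => hψd x (hJsub hx)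
  have hx₀J : x₀ ∈ J := Set.mem_Icc.2 ⟨by linarith, by linarith⟩
  have mono1 : MonotoneOn (fun x => ψ x - kl * x) J := by
    apply mono_aux' (convex_Icc _ _) (D := fun x => D x - kl)
    · intro x hx
      simpa [Pi.sub_def] using (hψJ x hx).sub ((hasDerivAt_id x).const_mul kl)
    · exact fun x hx => by linarith [(hDJ x hx).1]
  have mono2 : MonotoneOn (fun x => ku * x - ψ x) J := by
    apply mono_aux' (convex_Icc _ _) (D := fun x => ku - D x)
    · intro x hx
      simpa [Pi.sub_def] using ((hasDerivAt_id x).const_mul ku).sub (hψJ x hx)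
    · exact fun x hx => by linarith [(hDJ x hx).2]
  have hψsq : ∀ x ∈ J, kl^2*(x-x₀)^2 ≤ (ψ x)^2 ∧ (ψ x)^2 ≤ ku^2*(x-x₀)^2 := by
    intro x hx
    rcases le_total x₀ x with hxx | hxx
    · have h1 := mono1 hx₀J hx hxx
      have h2 := mono2 hx₀J hx hxx
      simp only [hψ0] at h1 h2
      have hp : kl*(x-x₀) ≤ ψ x := by linarith
      have hq : ψ x ≤ ku*(x-x₀) := by linarith
      have h0p : 0 ≤ kl*(x-x₀) := mul_nonneg hkl.le (by linarith)
      constructor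
      · nlinarith [hp, h0p]
      · nlinarith [hp, hq, h0p]
    · have h1 := mono1 hx hx₀J hxx
      have h2 := mono2 hx hx₀J hxx
      simp only [hψ0] at h1 h2
      have hp : ψ x ≤ kl*(x-x₀) := by linarith
      have hq : ku*(x-x₀) ≤ ψ x := by linarith
      have h0p : kl*(x-x₀) ≤ 0 := mul_nonpos_of_nonneg_of_nonpos hkl.le (by linarith)
      constructor
      · nlinarith [hp, h0p]
      · nlinarith [hp, hq, h0p]
  have monoψ : MonotoneOn ψ (Set.Icc c d) := by
    apply mono_aux' (convex_Icc _ _) (D := D) hψd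
    exact fun x hx => le_of_lt (hDpos x hx)
  set c₀ := kl * r with hc₀_def
  have hc₀ : 0 < c₀ := mul_pos hkl hr
  have htail : ∀ x ∈ Set.Icc c d, x ∉ Set.Ioo (x₀-r) (x₀+r) → c₀^2 ≤ (ψ x)^2 := by
    intro x hx hxn
    rw [Set.mem_Ioo, not_and_or, not_lt, not_lt] at hxn
    rcases hxn with h | h
    · have h1 : ψ x ≤ ψ (x₀ - r) := monoψ hx (hJsub (Set.left_mem_Icc.2 (by linarith))) h
      have h2 := mono1 (Set.left_mem_Icc.2 (by linarith) : x₀ - r ∈ J) hx₀J (by linarith)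
      simp only [hψ0] at h2
      nlinarith
    · have h1 : ψ (x₀ + r) ≤ ψ x := monoψ (hJsub (Set.right_mem_Icc.2 (by linarith))) hx h
      have h2 := mono1 hx₀J (Set.right_mem_Icc.2 (by linarith) : x₀ + r ∈ J) (by linarith)
      simp only [hψ0] at h2
      nlinarith
  -- Step D : bound for F
  obtain ⟨CF, hCF⟩ := (isCompact_Icc).exists_bound_of_continuousOn hFc
  have hCF0 : 0 ≤ CF := le_trans (norm_nonneg _) (hCF x₀ hx₀')
  have hFle : ∀ x ∈ Set.Icc c d, F x ≤ CF := fun x hx =>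
    le_trans (le_abs_self _) (hCF x hx)
  set K := CF/c₀^2*(d-c) with hK_def
  have hK0 : 0 ≤ K := mul_nonneg (by positivity) (by linarith)
  -- Step E
  have harct : Tendsto (fun δ : ℝ => M'*((2/ku) * Real.arctan (ku*r/δ))) (𝓝[>](0:ℝ))
      (𝓝 (M'*((2/ku)*(π/2)))) :=
    ((arctan_tendsto (mul_pos hku hr)).const_mul (2/ku)).const_mul M'
  have hlim_lower : L - ε < M'*((2/ku)*(π/2)) := by
    have he : M'*((2/ku)*(π/2)) = M'*(π/ku) := by
      rw [div_mul_div_comm, show 2*π/(ku*2) = π/ku by rw [mul_comm ku 2, mul_div_mul_left _ _ (two_ne_zero)]]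
    rw [he]
    linarith
  have e3' := harct.eventually_const_lt hlim_lower
  have e2' : ∀ᶠ δ in 𝓝[>](0:ℝ), δ * K < ε/2 := by
    have ht : Tendsto (fun δ : ℝ => δ * K) (𝓝[>](0:ℝ)) (𝓝 0) := by
      have := ((continuous_id.mul (continuous_const : Continuous fun _ : ℝ => K)).tendsto 0)
      simpa [Pi.mul_def] using this.mono_left nhdsWithin_le_nhds
    exact ht.eventually_lt_const (by linarith)
  filter_upwards [eventually_mem_nhdsWithin, e2', e3'] with δ hδ hδK hδarc
  rw [Set.mem_Ioi] at hδ
  -- main computation for fixed δ > 0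
  have hdenpos : ∀ x : ℝ, 0 < (ψ x)^2 + δ^2 := fun x => by positivity
  have hψc : ContinuousOn ψ (Set.Icc c d) :=
    fun x hx => ((hψd x hx).continuousAt).continuousWithinAt
  have hintc : ContinuousOn (fun x => F x / ((ψ x)^2 + δ^2)) (Set.Icc c d) := by
    apply hFc.div ((hψc.pow 2).add continuousOn_const)
    exact fun x _ => ne_of_gt (hdenpos x)
  have hii : ∀ u v : ℝ, u ∈ Set.Icc c d → v ∈ Set.Icc c d →
      IntervalIntegrable (fun x => F x / ((ψ x)^2 + δ^2)) volume u v := by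
    intro u v hu hv
    exact (hintc.mono (Set.uIcc_subset_Icc hu hv)).intervalIntegrable
  have hmem_cr : x₀ - r ∈ Set.Icc c d := ⟨hcr, by linarith⟩
  have hmem_dr : x₀ + r ∈ Set.Icc c d := ⟨by linarith, hdr⟩
  have hmem_c : c ∈ Set.Icc c d := Set.left_mem_Icc.2 (by linarith)
  have hmem_d : d ∈ Set.Icc c d := Set.right_mem_Icc.2 (by linarith)
  set I1 := ∫ x in c..(x₀-r), F x / ((ψ x)^2 + δ^2) with hI1_def
  set I2 := ∫ x in (x₀-r)..(x₀+r), F x / ((ψ x)^2 + δ^2) with hI2_def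
  set I3 := ∫ x in (x₀+r)..d, F x / ((ψ x)^2 + δ^2) with hI3_def
  have e12 : I1 + I2 = ∫ x in c..(x₀+r), F x / ((ψ x)^2 + δ^2) :=
    intervalIntegral.integral_add_adjacent_intervals
      (hii _ _ hmem_c hmem_cr) (hii _ _ hmem_cr hmem_dr)
  have hsplit : (∫ x in c..d, F x / ((ψ x)^2 + δ^2)) = I1 + I2 + I3 := by
    rw [e12]
    exact (intervalIntegral.integral_add_adjacent_intervals
      (hii _ _ hmem_c hmem_dr) (hii _ _ hmem_dr hmem_d)).symm
  -- nonnegativity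
  have hI1nn : 0 ≤ I1 := by
    apply intervalIntegral.integral_nonneg (by linarith)
    intro x hx
    exact div_nonneg (hF0 x ⟨hx.1, le_trans hx.2 (by linarith)⟩) (le_of_lt (hdenpos x))
  have hI3nn : 0 ≤ I3 := by
    apply intervalIntegral.integral_nonneg (by linarith)
    intro x hx
    exact div_nonneg (hF0 x ⟨le_trans (by linarith) hx.1, hx.2⟩) (le_of_lt (hdenpos x))
  -- tail upper bounds
  have hI1le : I1 ≤ (x₀ - r - c) * (CF/c₀^2) := by
    have hb := intervalIntegral.integral_mono_on (by linarith : c ≤ x₀ - r)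
      (hii _ _ hmem_c hmem_cr) (intervalIntegrable_const (c := CF/c₀^2))
      (fun x hx => ?_)
    · rw [intervalIntegral.integral_const, smul_eq_mul] at hb
      exact hb
    · have hxIcc : x ∈ Set.Icc c d := ⟨hx.1, le_trans hx.2 (by linarith)⟩
      have hxn : x ∉ Set.Ioo (x₀-r) (x₀+r) := by
        rw [Set.mem_Ioo, not_and_or, not_lt]
        exact Or.inl hx.2
      have hsq := htail x hxIcc hxn
      apply div_le_div₀ hCF0 (hFle x hxIcc) (by positivity)
      nlinarith [sq_nonneg δ]
  have hI3le : I3 ≤ (d - (x₀ + r)) * (CF/c₀^2) := by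
    have hb := intervalIntegral.integral_mono_on (by linarith : x₀ + r ≤ d)
      (hii _ _ hmem_dr hmem_d) (intervalIntegrable_const (c := CF/c₀^2))
      (fun x hx => ?_)
    · rw [intervalIntegral.integral_const, smul_eq_mul] at hb
      exact hb
    · have hxIcc : x ∈ Set.Icc c d := ⟨le_trans (by linarith) hx.1, hx.2⟩
      have hxn : x ∉ Set.Ioo (x₀-r) (x₀+r) := by
        rw [Set.mem_Ioo, not_and_or, not_lt, not_lt]
        exact Or.inr hx.1
      have hsq := htail x hxIcc hxn
      apply div_le_div₀ hCF0 (hFle x hxIcc) (by positivity)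
      nlinarith [sq_nonneg δ]
  -- middle lower bound
  have hIlow : M' * ((2/(ku*δ)) * Real.arctan (ku*r/δ)) ≤ I2 := by
    have hlowint : IntervalIntegrable (fun x => M' * (1/(ku^2*(x-x₀)^2 + δ^2)))
        volume (x₀-r) (x₀+r) := by
      apply Continuous.intervalIntegrable
      apply continuous_const.mul
      exact continuous_const.div (by fun_prop) (fun x => by positivity)
    have hb := intervalIntegral.integral_mono_on (by linarith : x₀ - r ≤ x₀ + r)
      hlowint (hii _ _ hmem_cr hmem_dr) (fun x hx => ?_)
    · rw [intervalIntegral.integral_const_mul, lorentz_sym hku hδ] at hb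
      calc M' * ((2/(ku*δ)) * Real.arctan (ku*r/δ)) = M' * ((2/(ku*δ)) * Real.arctan (ku*r/δ)) := rfl
      _ ≤ I2 := hb
    · have hxJ : x ∈ J := hx
      rw [mul_one_div]
      apply div_le_div₀ (hF0 x (hJsub hxJ)) (hFJ x hxJ).1 (hdenpos x)
      have := (hψsq x hxJ).2
      linarith
  -- middle upper bound
  have hIup : I2 ≤ (M+θ) * ((2/(kl*δ)) * Real.arctan (kl*r/δ)) := by
    have hupint : IntervalIntegrable (fun x => (M+θ) * (1/(kl^2*(x-x₀)^2 + δ^2)))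
        volume (x₀-r) (x₀+r) := by
      apply Continuous.intervalIntegrable
      apply continuous_const.mul
      exact continuous_const.div (by fun_prop) (fun x => by positivity)
    have hb := intervalIntegral.integral_mono_on (by linarith : x₀ - r ≤ x₀ + r)
      (hii _ _ hmem_cr hmem_dr) hupint (fun x hx => ?_)
    · rw [intervalIntegral.integral_const_mul, lorentz_sym hkl hδ] at hb
      exact hb
    · have hxJ : x ∈ J := hx
      rw [mul_one_div]
      apply div_le_div₀ (by linarith : (0:ℝ) ≤ M + θ) (hFJ x hxJ).2 (by positivity)
      have := (hψsq x hxJ).1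
      linarith [sq_nonneg δ]
  -- combine
  have hδI2up : δ * I2 < L + ε/2 := by
    have h1 : δ * I2 ≤ δ * ((M+θ) * ((2/(kl*δ)) * Real.arctan (kl*r/δ))) :=
      mul_le_mul_of_nonneg_left hIup (le_of_lt hδ)
    have heq : δ * ((M+θ) * ((2/(kl*δ)) * Real.arctan (kl*r/δ)))
        = (M+θ) * ((2/kl) * Real.arctan (kl*r/δ)) := by
      field_simp
    rw [heq] at h1
    have h2 : (M+θ) * ((2/kl) * Real.arctan (kl*r/δ)) ≤ (M+θ) * ((2/kl) * (π/2)) := by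
      apply mul_le_mul_of_nonneg_left _ (by linarith : (0:ℝ) ≤ M + θ)
      apply mul_le_mul_of_nonneg_left _ (by positivity : (0:ℝ) ≤ 2/kl)
      exact le_of_lt (Real.arctan_lt_pi_div_two _)
    have h3 : (M+θ) * ((2/kl) * (π/2)) = (M+θ) * (π/kl) := by
      rw [div_mul_div_comm, show 2*π/(kl*2) = π/kl by rw [mul_comm kl 2, mul_div_mul_left _ _ (two_ne_zero)]]
    linarith
  have hδI2low : L - ε < δ * I2 := by
    have h1 : δ * (M' * ((2/(ku*δ)) * Real.arctan (ku*r/δ))) ≤ δ * I2 :=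
      mul_le_mul_of_nonneg_left hIlow (le_of_lt hδ)
    have heq : δ * (M' * ((2/(ku*δ)) * Real.arctan (ku*r/δ)))
        = M' * ((2/ku) * Real.arctan (ku*r/δ)) := by
      field_simp
    rw [heq] at h1
    linarith
  have htails : δ * (I1 + I3) ≤ δ * K := by
    apply mul_le_mul_of_nonneg_left _ (le_of_lt hδ)
    have : I1 + I3 ≤ (x₀ - r - c) * (CF/c₀^2) + (d - (x₀ + r)) * (CF/c₀^2) := by linarith
    have h2 : (x₀ - r - c) * (CF/c₀^2) + (d - (x₀ + r)) * (CF/c₀^2) ≤ K := by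
      rw [hK_def]
      have hq : (0:ℝ) ≤ CF/c₀^2 := by positivity
      nlinarith
    linarith
  have htailsnn : 0 ≤ δ * (I1 + I3) := mul_nonneg (le_of_lt hδ) (by linarith)
  rw [hsplit, Real.dist_eq, abs_sub_lt_iff]
  constructor
  · have : δ * (I1 + I2 + I3) = δ * I2 + δ * (I1 + I3) := by ring
    rw [this]
    linarith
  · have : δ * (I1 + I2 + I3) = δ * I2 + δ * (I1 + I3) := by ring
    rw [this]
    linarith

end core

section mainaux
variable {θ₀ : ℝ}

lemma etaD_continuousAt {s : ℝ} (hs : s ≠ 0) : ContinuousAt (etaD θ₀) s := by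
  have hne : ((2:ℝ) * Real.sinh (s * π))^2 ≠ 0 := by
    have h2 := sinh_smul_pos hs pi_pos
    have : Real.sinh (s * π) ≠ 0 := by
      intro hh
      rw [hh, mul_zero] at h2
      exact lt_irrefl 0 h2
    positivity
  unfold etaD
  fun_prop (disch := assumption)

lemma eta_abs (s : ℝ) : eta θ₀ |s| = eta θ₀ s := by
  rcases le_total 0 s with h | h
  · rw [abs_of_nonneg h]
  · rw [abs_of_nonpos h]
    exact eta_even s

set_option maxHeartbeats 3000000 in
lemma main_aux {lam0 s₀ : ℝ} (h0 : 0 < θ₀) (h1 : θ₀ < π/2)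
    (hl0 : 0 < lam0) (hlb : lam0 < 1/2 - θ₀/π)
    (hs₀0 : 0 ≤ s₀) (hs₀ : eta θ₀ s₀ = lam0)
    {A B : ℝ → ℝ} (hAm : Measurable A) (hBm : Measurable B)
    (hA : Integrable A volume) (hB : Integrable B volume)
    (hA0 : ∀ s, 0 ≤ A s) (hB0 : ∀ s, 0 ≤ B s)
    (hAc : ∀ s : ℝ, s ≠ 0 → ContinuousAt A s) :
    Tendsto (fun δ : ℝ =>
        δ * ∫ s, (A s / ((lam0 - eta θ₀ s)^2 + δ^2) + B s / ((lam0 + eta θ₀ s)^2 + δ^2)))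
      (𝓝[>](0:ℝ)) (𝓝 (π * (A s₀ + A (-s₀)) / |deriv (eta θ₀) s₀|)) := by
  -- s₀ is positive
  have hs₀pos : 0 < s₀ := by
    rcases eq_or_lt_of_le hs₀0 with rfl | h
    · rw [eta_zero_eq] at hs₀
      linarith
    · exact h
  set c := s₀/2 with hc_def
  set d := 3*s₀/2 with hd_def
  have hcpos : 0 < c := by rw [hc_def]; linarith
  have hcd : c < d := by rw [hc_def, hd_def]; linarith
  have hs₀mem : s₀ ∈ Set.Ioo c d := ⟨by rw [hc_def]; linarith, by rw [hd_def]; linarith⟩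
  set ψ : ℝ → ℝ := fun s => lam0 - eta θ₀ s with hψ_def
  set D : ℝ → ℝ := fun s => -(etaD θ₀ s) with hD_def
  have hIccpos : ∀ x ∈ Set.Icc c d, (0:ℝ) < x := fun x hx => lt_of_lt_of_le hcpos hx.1
  have hψd : ∀ x ∈ Set.Icc c d, HasDerivAt ψ (D x) x := by
    intro x hx
    simpa [hψ_def, hD_def, Pi.sub_def] using
      ((hasDerivAt_const x lam0).sub (eta_hasDerivAt (ne_of_gt (hIccpos x hx))))
  have hDc : ContinuousOn D (Set.Icc c d) := fun x hx =>
    ((etaD_continuousAt (ne_of_gt (hIccpos x hx))).neg).continuousWithinAt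
  have hDpos : ∀ x ∈ Set.Icc c d, 0 < D x := by
    intro x hx
    simp only [hD_def]
    linarith [etaD_neg h0 h1 (hIccpos x hx)]
  have hψ0 : ψ s₀ = 0 := by rw [hψ_def]; simp [hs₀]
  have hderiv : deriv (eta θ₀) s₀ = etaD θ₀ s₀ := (eta_hasDerivAt (ne_of_gt hs₀pos)).deriv
  have habs : |deriv (eta θ₀) s₀| = D s₀ := by
    rw [hderiv, hD_def, abs_of_neg (etaD_neg h0 h1 hs₀pos)]
  -- the two core limits
  have hFc1 : ContinuousOn A (Set.Icc c d) := fun x hx =>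
    (hAc x (ne_of_gt (hIccpos x hx))).continuousWithinAt
  have hFc2 : ContinuousOn (fun s => A (-s)) (Set.Icc c d) := fun x hx =>
    ((hAc (-x) (by simpa using (ne_of_gt (hIccpos x hx)))).comp
      continuous_neg.continuousAt).continuousWithinAt
  have hcore1 := core hs₀mem hψd hDc hDpos hψ0 hFc1 (fun x _ => hA0 x)
  have hcore2 := core hs₀mem hψd hDc hDpos hψ0 hFc2 (fun x _ => hA0 (-x))
  -- tail bound constants
  have hc₁ : 0 < eta θ₀ c - lam0 := by
    have := eta_strictAntiOn h0 h1 (Set.mem_Ici.2 (le_of_lt hcpos))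
      (Set.mem_Ici.2 (le_of_lt (lt_trans hcpos hs₀mem.1))) hs₀mem.1
    rw [hs₀] at this
    linarith
  have hc₂ : 0 < lam0 - eta θ₀ d := by
    have := eta_strictAntiOn h0 h1 (Set.mem_Ici.2 (le_of_lt hs₀pos))
      (Set.mem_Ici.2 (le_of_lt (lt_trans hcpos hcd))) hs₀mem.2
    rw [hs₀] at this
    linarith
  set c₀ := min (eta θ₀ c - lam0) (lam0 - eta θ₀ d) with hc₀_def
  have hc₀pos : 0 < c₀ := lt_min hc₁ hc₂
  set U := Set.Ioo (-d) (-c) ∪ Set.Ioo c d with hU_def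
  have hUmeas : MeasurableSet U := measurableSet_Ioo.union measurableSet_Ioo
  have htailb : ∀ s : ℝ, s ∉ U → c₀^2 ≤ (lam0 - eta θ₀ s)^2 := by
    intro s hs
    rw [hU_def, Set.mem_union, not_or] at hs
    have habs' : |s| ≤ c ∨ d ≤ |s| := by
      by_contra hcon
      push_neg at hcon
      obtain ⟨hc1', hc2'⟩ := hcon
      rcases le_total 0 s with h | h
      · rw [abs_of_nonneg h] at hc1' hc2'
        exact hs.2 (Set.mem_Ioo.2 ⟨hc1', hc2'⟩)
      · rw [abs_of_nonpos h] at hc1' hc2'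
        exact hs.1 (Set.mem_Ioo.2 ⟨by linarith, by linarith⟩)
    rcases habs' with h | h
    · have hle : eta θ₀ c ≤ eta θ₀ |s| :=
        eta_antitoneOn h0 h1 (Set.mem_Ici.2 (abs_nonneg s))
          (Set.mem_Ici.2 (le_of_lt hcpos)) h
      rw [eta_abs] at hle
      have hm := min_le_left (eta θ₀ c - lam0) (lam0 - eta θ₀ d)
      nlinarith
    · have hle : eta θ₀ |s| ≤ eta θ₀ d :=
        eta_antitoneOn h0 h1 (Set.mem_Ici.2 (le_of_lt (lt_trans hcpos hcd)))
          (Set.mem_Ici.2 (le_trans (le_of_lt (lt_trans hcpos hcd)) h)) h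
      rw [eta_abs] at hle
      have hm := min_le_right (eta θ₀ c - lam0) (lam0 - eta θ₀ d)
      nlinarith
  have hAnn : (0:ℝ) ≤ ∫ s, A s := integral_nonneg hA0
  have hBnn : (0:ℝ) ≤ ∫ s, B s := integral_nonneg hB0
  -- tail limit for t1
  have htail_tendsto : Tendsto
      (fun δ : ℝ => δ * ∫ s in Uᶜ, A s / ((lam0 - eta θ₀ s)^2 + δ^2))
      (𝓝[>](0:ℝ)) (𝓝 0) := by
    have hup : Tendsto (fun δ : ℝ => δ * ((∫ s, A s)/c₀^2)) (𝓝[>](0:ℝ)) (𝓝 0) := by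
      have := ((continuous_id.mul (continuous_const :
        Continuous fun _ : ℝ => (∫ s, A s)/c₀^2)).tendsto 0)
      simpa [Pi.mul_def] using this.mono_left nhdsWithin_le_nhds
    apply tendsto_of_tendsto_of_tendsto_of_le_of_le' tendsto_const_nhds hup
    · filter_upwards [eventually_mem_nhdsWithin] with δ hδ
      rw [Set.mem_Ioi] at hδ
      apply mul_nonneg (le_of_lt hδ)
      apply setIntegral_nonneg hUmeas.compl
      intro s _
      exact div_nonneg (hA0 s) (by positivity)
    · filter_upwards [eventually_mem_nhdsWithin] with δ hδ
      rw [Set.mem_Ioi] at hδ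
      apply mul_le_mul_of_nonneg_left _ (le_of_lt hδ)
      have hden : ∀ s : ℝ, 0 < (lam0 - eta θ₀ s)^2 + δ^2 := fun s => by positivity
      have hInt1 : Integrable (fun s => A s / ((lam0 - eta θ₀ s)^2 + δ^2)) volume := by
        apply (hA.div_const (δ^2)).mono'
        · exact (hAm.div (((measurable_const.sub eta_measurable).pow_const 2).add_const
            (δ^2))).aestronglyMeasurable
        · apply ae_of_all
          intro s
          rw [Real.norm_eq_abs, abs_of_nonneg (div_nonneg (hA0 s) (le_of_lt (hden s)))]
          exact div_le_div₀ (hA0 s) (le_refl (A s)) (by positivity) (by nlinarith [sq_nonneg (lam0 - eta θ₀ s)])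
      calc (∫ s in Uᶜ, A s / ((lam0 - eta θ₀ s)^2 + δ^2))
          ≤ ∫ s in Uᶜ, A s / c₀^2 := by
            apply setIntegral_mono_on (hInt1.integrableOn)
              ((hA.div_const (c₀^2)).integrableOn) hUmeas.compl
            intro s hs
            exact div_le_div₀ (hA0 s) (le_refl (A s)) (by positivity)
              (by nlinarith [htailb s hs, sq_nonneg δ])
      _ = (∫ s in Uᶜ, A s) / c₀^2 := by rw [integral_div]
      _ ≤ (∫ s, A s) / c₀^2 := by
            apply (div_le_div_iff_of_pos_right (by positivity : (0:ℝ) < c₀^2)).2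
            exact setIntegral_le_integral hA (ae_of_all _ hA0)
  -- t2 tendsto 0
  have ht2_tendsto : Tendsto
      (fun δ : ℝ => δ * ∫ s, B s / ((lam0 + eta θ₀ s)^2 + δ^2)) (𝓝[>](0:ℝ)) (𝓝 0) := by
    have hup : Tendsto (fun δ : ℝ => δ * ((∫ s, B s)/lam0^2)) (𝓝[>](0:ℝ)) (𝓝 0) := by
      have := ((continuous_id.mul (continuous_const :
        Continuous fun _ : ℝ => (∫ s, B s)/lam0^2)).tendsto 0)
      simpa [Pi.mul_def] using this.mono_left nhdsWithin_le_nhds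
    apply tendsto_of_tendsto_of_tendsto_of_le_of_le' tendsto_const_nhds hup
    · filter_upwards [eventually_mem_nhdsWithin] with δ hδ
      rw [Set.mem_Ioi] at hδ
      apply mul_nonneg (le_of_lt hδ)
      apply integral_nonneg
      intro s
      exact div_nonneg (hB0 s) (by positivity)
    · filter_upwards [eventually_mem_nhdsWithin] with δ hδ
      rw [Set.mem_Ioi] at hδ
      apply mul_le_mul_of_nonneg_left _ (le_of_lt hδ)
      have hInt2 : Integrable (fun s => B s / ((lam0 + eta θ₀ s)^2 + δ^2)) volume := by
        apply (hB.div_const (δ^2)).mono'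
        · exact (hBm.div (((measurable_const.add eta_measurable).pow_const 2).add_const
            (δ^2))).aestronglyMeasurable
        · apply ae_of_all
          intro s
          rw [Real.norm_eq_abs, abs_of_nonneg (div_nonneg (hB0 s) (by positivity))]
          exact div_le_div₀ (hB0 s) (le_refl (B s)) (by positivity)
            (by nlinarith [sq_nonneg (lam0 + eta θ₀ s)])
      calc (∫ s, B s / ((lam0 + eta θ₀ s)^2 + δ^2))
          ≤ ∫ s, B s / lam0^2 := by
            apply integral_mono hInt2 (hB.div_const _)
            intro s
            exact div_le_div₀ (hB0 s) (le_refl (B s)) (by positivity)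
              (by nlinarith [eta_pos h0 h1 s, sq_nonneg δ])
      _ = (∫ s, B s) / lam0^2 := by rw [integral_div]
  -- the disjointness
  have hdisj : Disjoint (Set.Ioo (-d) (-c)) (Set.Ioo c d) := by
    rw [Set.disjoint_left]
    intro a ha hb
    have h1 := ha.2
    have h2 := hb.1
    linarith
  -- functional decomposition
  have hfun : (fun δ : ℝ =>
      (δ * ∫ x in c..d, A x / ((ψ x)^2 + δ^2))
      + (δ * ∫ x in c..d, A (-x) / ((ψ x)^2 + δ^2))
      + (δ * ∫ s in Uᶜ, A s / ((lam0 - eta θ₀ s)^2 + δ^2))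
      + (δ * ∫ s, B s / ((lam0 + eta θ₀ s)^2 + δ^2)))
      =ᶠ[𝓝[>](0:ℝ)] (fun δ : ℝ =>
      δ * ∫ s, (A s / ((lam0 - eta θ₀ s)^2 + δ^2) + B s / ((lam0 + eta θ₀ s)^2 + δ^2))) := by
    filter_upwards [eventually_mem_nhdsWithin] with δ hδ
    rw [Set.mem_Ioi] at hδ
    have hInt1 : Integrable (fun s => A s / ((lam0 - eta θ₀ s)^2 + δ^2)) volume := by
      apply (hA.div_const (δ^2)).mono'
      · exact (hAm.div (((measurable_const.sub eta_measurable).pow_const 2).add_const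
          (δ^2))).aestronglyMeasurable
      · apply ae_of_all
        intro s
        rw [Real.norm_eq_abs, abs_of_nonneg (div_nonneg (hA0 s) (by positivity))]
        exact div_le_div₀ (hA0 s) (le_refl (A s)) (by positivity)
          (by nlinarith [sq_nonneg (lam0 - eta θ₀ s)])
    have hInt2 : Integrable (fun s => B s / ((lam0 + eta θ₀ s)^2 + δ^2)) volume := by
      apply (hB.div_const (δ^2)).mono'
      · exact (hBm.div (((measurable_const.add eta_measurable).pow_const 2).add_const
          (δ^2))).aestronglyMeasurable
      · apply ae_of_all
        intro s
        rw [Real.norm_eq_abs, abs_of_nonneg (div_nonneg (hB0 s) (by positivity))]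
        exact div_le_div₀ (hB0 s) (le_refl (B s)) (by positivity)
          (by nlinarith [sq_nonneg (lam0 + eta θ₀ s)])
    have hsplit1 : (∫ s, A s / ((lam0 - eta θ₀ s)^2 + δ^2))
        = (∫ s in U, A s / ((lam0 - eta θ₀ s)^2 + δ^2))
          + ∫ s in Uᶜ, A s / ((lam0 - eta θ₀ s)^2 + δ^2) :=
      (integral_add_compl hUmeas hInt1).symm
    have hsplitU : (∫ s in U, A s / ((lam0 - eta θ₀ s)^2 + δ^2))
        = (∫ s in Set.Ioo (-d) (-c), A s / ((lam0 - eta θ₀ s)^2 + δ^2))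
          + ∫ s in Set.Ioo c d, A s / ((lam0 - eta θ₀ s)^2 + δ^2) := by
      rw [hU_def]
      exact setIntegral_union hdisj measurableSet_Ioo hInt1.integrableOn hInt1.integrableOn
    have hIoo1 : (∫ s in Set.Ioo c d, A s / ((lam0 - eta θ₀ s)^2 + δ^2))
        = ∫ x in c..d, A x / ((ψ x)^2 + δ^2) := by
      rw [intervalIntegral.integral_of_le (le_of_lt hcd), integral_Ioc_eq_integral_Ioo]
    have hIoo2 : (∫ s in Set.Ioo (-d) (-c), A s / ((lam0 - eta θ₀ s)^2 + δ^2))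
        = ∫ x in c..d, A (-x) / ((ψ x)^2 + δ^2) := by
      calc (∫ s in Set.Ioo (-d) (-c), A s / ((lam0 - eta θ₀ s)^2 + δ^2))
          = ∫ x in (-d)..(-c), A x / ((lam0 - eta θ₀ x)^2 + δ^2) := by
            rw [intervalIntegral.integral_of_le (by linarith), integral_Ioc_eq_integral_Ioo]
      _ = ∫ x in c..d, A (-x) / ((lam0 - eta θ₀ (-x))^2 + δ^2) :=
            (intervalIntegral.integral_comp_neg
              (fun x => A x / ((lam0 - eta θ₀ x)^2 + δ^2))).symm
      _ = ∫ x in c..d, A (-x) / ((ψ x)^2 + δ^2) := by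
            apply intervalIntegral.integral_congr
            intro x _
            simp only [hψ_def, eta_even]
    rw [integral_add hInt1 hInt2, hsplit1, hsplitU, hIoo1, hIoo2]
    ring
  have hsum := ((hcore1.add hcore2).add htail_tendsto).add ht2_tendsto
  have hfinal := hsum.congr' hfun
  convert hfinal using 2
  rw [habs]
  ring
end mainaux

section final

lemma integrable_of_memL2 {p : ℝ → ℝ} (hpm : Measurable p) (hp0 : ∀ s, 0 ≤ p s)
    {g : ℝ → ℂ}
    (hg : MemLp g 2 ((volume : Measure ℝ).withDensity fun s => ENNReal.ofReal (p s))) :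
    Integrable (fun s => p s * ‖g s‖^2) volume := by
  have h1 := hg.integrable_norm_rpow (by norm_num) (by norm_num)
  rw [integrable_withDensity_iff (by fun_prop) (ae_of_all _ fun s => ENNReal.ofReal_lt_top)] at h1
  have he : (fun s => p s * ‖g s‖^2)
      = fun s => ‖g s‖ ^ ((2:ENNReal).toReal) * (ENNReal.ofReal (p s)).toReal := by
    funext s
    rw [ENNReal.toReal_ofReal (hp0 s)]
    rw [show ((2:ENNReal).toReal) = ((2:ℕ):ℝ) by simp]
    rw [Real.rpow_natCast]
    ring
  rw [he]
  exact h1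

end final

/-- plasmon resonance at an interior point of the continuous spectrum:
for `g = (g₁,g₂) ∈ W*` with continuous components and
`N(δ) = (1/2)∫ [p₁|g₁|²/((lam0−η)²+δ²) + p₂|g₂|²/((lam0+η)²+δ²)]`, one has:
if `lam0 ∈ (0,b)` then `δ·N(δ) → π p₁(s₀)(|g₁(s₀)|²+|g₁(−s₀)|²)/(2|η'(s₀)|)` with
`s₀ = σ(lam0)`; if `lam0 ∈ (−b,0)` then `δ·N(δ) → π p₂(s₀)(|g₂(s₀)|²+|g₂(−s₀)|²)/(2|η'(s₀)|)`
with `s₀ = σ(−lam0)`. Here `σ` inverts `η|_{[0,∞)}` and `b = 1/2 − θ₀/π`. -/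

theorem statement15 (θ₀ : ℝ) (h0 : 0 < θ₀) (h1 : θ₀ < π / 2) (σ : ℝ → ℝ)
    (hσ : ∀ t : ℝ, 0 < t → t ≤ 1 / 2 - θ₀ / π → 0 ≤ σ t ∧ eta θ₀ (σ t) = t)
    (g₁ g₂ : ℝ → ℂ) (hg₁c : Continuous g₁) (hg₂c : Continuous g₂)
    (hg₁ : MemLp g₁ 2 (mu1 θ₀)) (hg₂ : MemLp g₂ 2 (mu2 θ₀))
    (lam0 : ℝ) (N : ℝ → ℝ)
    (hN : ∀ δ : ℝ, N δ =
      (1 / 2) * ∫ s,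
        (p1 θ₀ s * ‖g₁ s‖ ^ 2 / ((lam0 - eta θ₀ s) ^ 2 + δ ^ 2)
          + p2 θ₀ s * ‖g₂ s‖ ^ 2 / ((lam0 + eta θ₀ s) ^ 2 + δ ^ 2))) :
    (0 < lam0 → lam0 < 1 / 2 - θ₀ / π →
      Tendsto (fun δ : ℝ => δ * N δ) (𝓝[>] 0)
        (𝓝 (π * p1 θ₀ (σ lam0) * (‖g₁ (σ lam0)‖ ^ 2 + ‖g₁ (-(σ lam0))‖ ^ 2)
            / (2 * |deriv (eta θ₀) (σ lam0)|)))) ∧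
    (-(1 / 2 - θ₀ / π) < lam0 → lam0 < 0 →
      Tendsto (fun δ : ℝ => δ * N δ) (𝓝[>] 0)
        (𝓝 (π * p2 θ₀ (σ (-lam0)) * (‖g₂ (σ (-lam0))‖ ^ 2 + ‖g₂ (-(σ (-lam0)))‖ ^ 2)
            / (2 * |deriv (eta θ₀) (σ (-lam0))|)))) := by
  have hAm : Measurable (fun s => p1 θ₀ s * ‖g₁ s‖^2) :=
    p1_measurable.mul ((hg₁c.norm.pow 2).measurable)
  have hBm : Measurable (fun s => p2 θ₀ s * ‖g₂ s‖^2) :=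
    p2_measurable.mul ((hg₂c.norm.pow 2).measurable)
  have hA : Integrable (fun s => p1 θ₀ s * ‖g₁ s‖^2) volume :=
    integrable_of_memL2 p1_measurable (p1_nonneg h0 h1) hg₁
  have hB : Integrable (fun s => p2 θ₀ s * ‖g₂ s‖^2) volume :=
    integrable_of_memL2 p2_measurable (p2_nonneg h0 h1) hg₂
  have hA0 : ∀ s : ℝ, 0 ≤ p1 θ₀ s * ‖g₁ s‖^2 := fun s =>
    mul_nonneg (p1_nonneg h0 h1 s) (by positivity)
  have hB0 : ∀ s : ℝ, 0 ≤ p2 θ₀ s * ‖g₂ s‖^2 := fun s =>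
    mul_nonneg (p2_nonneg h0 h1 s) (by positivity)
  have hAc : ∀ s : ℝ, s ≠ 0 → ContinuousAt (fun s => p1 θ₀ s * ‖g₁ s‖^2) s := fun s hs =>
    (p1_continuousAt hs).mul ((hg₁c.norm.pow 2).continuousAt)
  have hBc : ∀ s : ℝ, s ≠ 0 → ContinuousAt (fun s => p2 θ₀ s * ‖g₂ s‖^2) s := fun s hs =>
    (p2_continuousAt hs).mul ((hg₂c.norm.pow 2).continuousAt)
  constructor
  · intro hl0 hlb
    obtain ⟨hs₀0, hs₀⟩ := hσ lam0 hl0 (le_of_lt hlb)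
    have hmain := main_aux h0 h1 hl0 hlb hs₀0 hs₀ hAm hBm hA hB hA0 hB0 hAc
    have h2 := hmain.const_mul (1/2 : ℝ)
    have hfeq : (fun δ : ℝ => δ * N δ)
        = fun δ : ℝ => (1/2 : ℝ) * (δ * ∫ s,
            (p1 θ₀ s * ‖g₁ s‖^2 / ((lam0 - eta θ₀ s)^2 + δ^2)
              + p2 θ₀ s * ‖g₂ s‖^2 / ((lam0 + eta θ₀ s)^2 + δ^2))) := by
      funext δ
      rw [hN δ]
      ring
    have hval : π * p1 θ₀ (σ lam0) * (‖g₁ (σ lam0)‖ ^ 2 + ‖g₁ (-(σ lam0))‖ ^ 2)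
          / (2 * |deriv (eta θ₀) (σ lam0)|)
        = (1/2 : ℝ) * (π * (p1 θ₀ (σ lam0) * ‖g₁ (σ lam0)‖^2
            + p1 θ₀ (-(σ lam0)) * ‖g₁ (-(σ lam0))‖^2) / |deriv (eta θ₀) (σ lam0)|) := by
      rw [p1_even]
      ring
    rw [hfeq, hval]
    exact h2
  · intro hmb hl0
    have hμ0 : 0 < -lam0 := by linarith
    have hμb : -lam0 < 1/2 - θ₀/π := by linarith
    obtain ⟨hs₀0, hs₀⟩ := hσ (-lam0) hμ0 (le_of_lt hμb)
    have hmain := main_aux h0 h1 hμ0 hμb hs₀0 hs₀ hBm hAm hB hA hB0 hA0 hBc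
    have h2 := hmain.const_mul (1/2 : ℝ)
    have hfeq : (fun δ : ℝ => δ * N δ)
        = fun δ : ℝ => (1/2 : ℝ) * (δ * ∫ s,
            (p2 θ₀ s * ‖g₂ s‖^2 / ((-lam0 - eta θ₀ s)^2 + δ^2)
              + p1 θ₀ s * ‖g₁ s‖^2 / ((-lam0 + eta θ₀ s)^2 + δ^2))) := by
      funext δ
      rw [hN δ]
      have hintg : (fun s => p1 θ₀ s * ‖g₁ s‖ ^ 2 / ((lam0 - eta θ₀ s) ^ 2 + δ ^ 2)
            + p2 θ₀ s * ‖g₂ s‖ ^ 2 / ((lam0 + eta θ₀ s) ^ 2 + δ ^ 2))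
          = fun s => (p2 θ₀ s * ‖g₂ s‖^2 / ((-lam0 - eta θ₀ s)^2 + δ^2)
            + p1 θ₀ s * ‖g₁ s‖^2 / ((-lam0 + eta θ₀ s)^2 + δ^2)) := by
        funext s
        have e1 : (-lam0 - eta θ₀ s)^2 = (lam0 + eta θ₀ s)^2 := by ring
        have e2 : (-lam0 + eta θ₀ s)^2 = (lam0 - eta θ₀ s)^2 := by ring
        rw [e1, e2]
        ring
      rw [hintg]
      ring
    have hval : π * p2 θ₀ (σ (-lam0)) * (‖g₂ (σ (-lam0))‖ ^ 2 + ‖g₂ (-(σ (-lam0)))‖ ^ 2)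
          / (2 * |deriv (eta θ₀) (σ (-lam0))|)
        = (1/2 : ℝ) * (π * (p2 θ₀ (σ (-lam0)) * ‖g₂ (σ (-lam0))‖^2
            + p2 θ₀ (-(σ (-lam0))) * ‖g₂ (-(σ (-lam0)))‖^2) / |deriv (eta θ₀) (σ (-lam0))|) := by
      rw [p2_even]
      ring
    rw [hfeq, hval]
    exact h2
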